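/- arXiv:1406.0947 — 2 statements merged into one kernel-verified Lean document; each statement's English description precedes it below -/
import Mathlib

section
/- Fix integers m ≥ 2 and n ≥ 1. The map θ_m, which sends a stack S on [n+m−1] to the diagram θ_m(S) on [n] whose arc set is {(i, j−m+1) : (i,j) an arc of S}, is a well-defined bijection from the set of m-regular linear stacks on [n+m−1] onto the set of m-reduced zigzag stacks on [n]. -/
open PowerSeries

namespace Paper

/-- The arc set of a diagram: a finite set of pairs `(i,j)`. -/
abbrev Arcs := Finset (ℕ × ℕ)

/-- A diagram on `[n] = {1,…,n}`: every arc `(i,j)` satisfies `1 ≤ i < j ≤ n`. -/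
def IsDiagram (n : ℕ) (A : Arcs) : Prop :=
  ∀ p ∈ A, 1 ≤ p.1 ∧ p.1 < p.2 ∧ p.2 ≤ n

/-- Two arcs `p = (i₁,j₁)` and `q = (i₂,j₂)` cross if `i₁ < i₂ < j₁ < j₂`. -/
def Crossing (p q : ℕ × ℕ) : Prop :=
  p.1 < q.1 ∧ q.1 < p.2 ∧ p.2 < q.2

/-- A stack on `[n]`: a diagram with no two crossing arcs. -/
def IsStack (n : ℕ) (A : Arcs) : Prop :=
  IsDiagram n A ∧ ∀ p ∈ A, ∀ q ∈ A, ¬ Crossing p q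

/-- Left-degree of vertex `v`: number of arcs `(u,v)` with `u < v`. -/
def ld (A : Arcs) (v : ℕ) : ℕ := (A.filter fun p => p.2 = v).card

/-- Right-degree of vertex `v`: number of arcs `(v,w)` with `v < w`. -/
def rd (A : Arcs) (v : ℕ) : ℕ := (A.filter fun p => p.1 = v).card

/-- Degree of a vertex. -/
def deg (A : Arcs) (v : ℕ) : ℕ := ld A v + rd A v

/-- A zigzag stack: a stack where every vertex has degree ≤ 2 and no vertex has both
positive left-degree and positive right-degree. -/
def IsZigzag (n : ℕ) (A : Arcs) : Prop :=
  IsStack n A ∧ (∀ v, deg A v ≤ 2) ∧ ∀ v, ¬ (1 ≤ ld A v ∧ 1 ≤ rd A v)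

/-- Adjacency in the underlying graph of a diagram. -/
def adj (A : Arcs) (u v : ℕ) : Prop := (u, v) ∈ A ∨ (v, u) ∈ A

/-- `v` lies in the primary component (connected component of vertex 1). -/
def inPrimary (A : Arcs) (v : ℕ) : Prop := Relation.ReflTransGen (adj A) 1 v

/-- The underlying graph on vertex set `[n]` is connected. -/
def ConnectedOn (n : ℕ) (A : Arcs) : Prop :=
  ∀ u v, 1 ≤ u → u ≤ n → 1 ≤ v → v ≤ n → Relation.ReflTransGen (adj A) u v

/-- Number of stacks on `[n]`. -/
noncomputable def stackCount (n : ℕ) : ℕ := Nat.card {A : Arcs // IsStack n A}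

/-- Number of zigzag stacks on `[n]`. -/
noncomputable def zigzagCount (n : ℕ) : ℕ := Nat.card {A : Arcs // IsZigzag n A}

/-- Number of connected zigzag stacks on `[n]`. -/
noncomputable def connZigzagCount (n : ℕ) : ℕ :=
  Nat.card {A : Arcs // IsZigzag n A ∧ ConnectedOn n A}

/-- The ordinary generating function of the numbers of zigzag stacks. -/
noncomputable def Zgf : PowerSeries ℚ := PowerSeries.mk fun n => (zigzagCount n : ℚ)

/-- The power series variable over ℚ. -/
noncomputable def Xq : PowerSeries ℚ := PowerSeries.X

/-- An `m`-reduced zigzag stack on `[n]`: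
(1) `ld(i) + rd(i+m−1) ≤ 2` for `1 ≤ i ≤ n−m+1` (written additively);
(2) if `1 ≤ i < j ≤ n` with `ld(i) > 0` and `rd(j) > 0` then `j − i ≥ m−1`. -/
def MRed (m n : ℕ) (A : Arcs) : Prop :=
  IsZigzag n A ∧
  (∀ i, 1 ≤ i → i + m ≤ n + 1 → ld A i + rd A (i + m - 1) ≤ 2) ∧
  (∀ i j, 1 ≤ i → i < j → j ≤ n → 0 < ld A i → 0 < rd A j → i + m ≤ j + 1)

/-- An `m`-regular linear stack on `[n]`: every arc has length ≥ m and every vertex has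
degree ≤ 2. -/
def RegLinear (m n : ℕ) (A : Arcs) : Prop :=
  IsStack n A ∧ (∀ p ∈ A, p.1 + m ≤ p.2) ∧ ∀ v, deg A v ≤ 2

/-- Number of `m`-reduced zigzag stacks on `[n]`. -/
noncomputable def zm (m n : ℕ) : ℕ := Nat.card {A : Arcs // MRed m n A}

/-- Number of `m`-regular linear stacks on `[n]`. -/
noncomputable def rmc (m n : ℕ) : ℕ := Nat.card {A : Arcs // RegLinear m n A}

/-- Generating function of `m`-reduced zigzag stacks. -/
noncomputable def Zm (m : ℕ) : PowerSeries ℚ := PowerSeries.mk fun n => (zm m n : ℚ)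

/-- Generating function of `m`-regular linear stacks. -/
noncomputable def Rm (m : ℕ) : PowerSeries ℚ := PowerSeries.mk fun n => (rmc m n : ℚ)

/-- Extended left-degree function used to define boundary types. -/
def extLD (A : Arcs) (l a v : ℕ) : ℕ :=
  if v = 0 then a else if v = l + 1 then 0 else ld A v

/-- Extended right-degree function used to define boundary types. -/
def extRD (A : Arcs) (l b v : ℕ) : ℕ :=
  if v = 0 then 0 else if v = l + 1 then b else rd A v

/-- An `m`-reduced zigzag stack on `[l]` of boundary type `(a,b)`. -/
def BoundaryType (m a b l : ℕ) (A : Arcs) : Prop :=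
  MRed m l A ∧
  (∀ i, i + m ≤ l + 2 → extLD A l a i + extRD A l b (i + m - 1) ≤ 2) ∧
  (∀ i j, i < j → j ≤ l + 1 → 0 < extLD A l a i → 0 < extRD A l b j → i + m ≤ j + 1)

/-- Number of boundary-type-`(a,b)` structures on `[n]`. -/
noncomputable def tc (m a b n : ℕ) : ℕ := Nat.card {A : Arcs // BoundaryType m a b n A}

/-- Generating functions `T_i(x)`; types T₁,…,T₆ correspond to `(a,b)` =
(0,0), (1,0), (1,1), (2,0), (2,1), (2,2). -/
noncomputable def Tgf (m a b : ℕ) : PowerSeries ℚ := PowerSeries.mk fun n => (tc m a b n : ℚ)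

/-- Type G : `m`-reduced zigzag stack with `deg(1) ≤ 1`. -/
def TypeG (m n : ℕ) (A : Arcs) : Prop := MRed m n A ∧ deg A 1 ≤ 1

/-- Type H : `m`-reduced zigzag stack with `deg(1) ≤ 1` and `deg(n) ≤ 1`. -/
def TypeH (m n : ℕ) (A : Arcs) : Prop := MRed m n A ∧ deg A 1 ≤ 1 ∧ deg A n ≤ 1

noncomputable def gcnt (m n : ℕ) : ℕ := Nat.card {A : Arcs // TypeG m n A}
noncomputable def hcnt (m n : ℕ) : ℕ := Nat.card {A : Arcs // TypeH m n A}

/-- Generating function `G(x)`. -/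
noncomputable def Ggf (m : ℕ) : PowerSeries ℚ := PowerSeries.mk fun n => (gcnt m n : ℚ)

/-- Generating function `H(x)`. -/
noncomputable def Hgf (m : ℕ) : PowerSeries ℚ := PowerSeries.mk fun n => (hcnt m n : ℚ)

/-- The reduction map θ_m: replace each arc `(i,j)` by `(i, j−m+1)`. -/
def theta (m : ℕ) (A : Arcs) : Arcs := A.image fun p => (p.1, p.2 - m + 1)

/-- Relabel a structure whose arcs lie in `{c+1, …}` down by `c`. -/
def shiftDown (c : ℕ) (A : Arcs) : Arcs := A.image fun p => (p.1 - c, p.2 - c)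

/-- Conditions (1) and (2) of `m`-reducedness restricted to a set `J` of vertices. -/
def CondOn (m : ℕ) (A : Arcs) (J : Finset ℕ) : Prop :=
  (∀ i, i ∈ J → i + m - 1 ∈ J → ld A i + rd A (i + m - 1) ≤ 2) ∧
  (∀ i j, i ∈ J → j ∈ J → i < j → 0 < ld A i → 0 < rd A j → i + m ≤ j + 1)


section ThetaBijection

lemma exists_of_ld_pos {A : Arcs} {w : ℕ} (h : 0 < ld A w) : ∃ a, (a, w) ∈ A := by
  obtain ⟨p, hp⟩ := Finset.card_pos.mp h
  rw [Finset.mem_filter] at hp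
  obtain ⟨a, b⟩ := p
  obtain ⟨h1, h2⟩ := hp
  simp only at h2
  subst h2
  exact ⟨a, h1⟩

lemma exists_of_rd_pos {A : Arcs} {v : ℕ} (h : 0 < rd A v) : ∃ c, (v, c) ∈ A := by
  obtain ⟨p, hp⟩ := Finset.card_pos.mp h
  rw [Finset.mem_filter] at hp
  obtain ⟨a, b⟩ := p
  obtain ⟨h1, h2⟩ := hp
  simp only at h2
  subst h2
  exact ⟨b, h1⟩

lemma ld_pos_of_mem {A : Arcs} {p : ℕ × ℕ} (h : p ∈ A) : 0 < ld A p.2 :=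
  Finset.card_pos.mpr ⟨p, Finset.mem_filter.mpr ⟨h, rfl⟩⟩

lemma rd_pos_of_mem {A : Arcs} {p : ℕ × ℕ} (h : p ∈ A) : 0 < rd A p.1 :=
  Finset.card_pos.mpr ⟨p, Finset.mem_filter.mpr ⟨h, rfl⟩⟩

lemma rd_eq_zero_of_forall {A : Arcs} {v : ℕ} (h : ∀ p ∈ A, p.1 ≠ v) : rd A v = 0 := by
  unfold rd
  rw [Finset.card_eq_zero, Finset.filter_eq_empty_iff]
  exact h

/-- Key crossing lemma for m-regular linear stacks. -/
lemma reg_no_close {m N : ℕ} {A : Arcs} (hst : IsStack N A)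
    (hlen : ∀ p ∈ A, p.1 + m ≤ p.2)
    {v w : ℕ} (hvw : v < w) (hwm : w < v + m)
    (hl : 0 < ld A w) (hr : 0 < rd A v) : False := by
  obtain ⟨a, ha⟩ := exists_of_ld_pos hl
  obtain ⟨c, hc⟩ := exists_of_rd_pos hr
  have l1 : a + m ≤ w := hlen _ ha
  have l2 : v + m ≤ c := hlen _ hc
  exact hst.2 _ ha _ hc ⟨by omega, by omega, by omega⟩

lemma phi_injOn {m : ℕ} (hm : 1 ≤ m) {A : Arcs} (h2 : ∀ p ∈ A, m ≤ p.2) :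
    Set.InjOn (fun p : ℕ × ℕ => (p.1, p.2 - m + 1)) ↑A := by
  intro p hp q hq h
  have hp2 := h2 p (Finset.mem_coe.mp hp)
  have hq2 := h2 q (Finset.mem_coe.mp hq)
  have e1 := congrArg Prod.fst h
  have e2 := congrArg Prod.snd h
  simp only at e1 e2
  exact Prod.ext e1 (by omega)

lemma theta_rd {m : ℕ} (hm : 1 ≤ m) {A : Arcs} (h2 : ∀ p ∈ A, m ≤ p.2) (v : ℕ) :
    rd (theta m A) v = rd A v := by
  unfold rd theta
  rw [Finset.filter_image]
  rw [Finset.card_image_of_injOn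
    ((phi_injOn hm h2).mono (Finset.coe_subset.mpr (Finset.filter_subset _ _)))]

lemma theta_ld {m : ℕ} (hm : 1 ≤ m) {A : Arcs} (h2 : ∀ p ∈ A, m ≤ p.2) (v : ℕ) :
    ld (theta m A) v = ld A (v + m - 1) := by
  unfold ld theta
  rw [Finset.filter_image]
  rw [Finset.card_image_of_injOn
    ((phi_injOn hm h2).mono (Finset.coe_subset.mpr (Finset.filter_subset _ _)))]
  congr 1
  apply Finset.filter_congr
  intro x hx
  have := h2 x hx
  simp only
  constructor <;> intro h <;> omega

lemma psi_injOn {m : ℕ} (hm : 1 ≤ m) (s : Set (ℕ × ℕ)) :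
    Set.InjOn (fun p : ℕ × ℕ => (p.1, p.2 + m - 1)) s := by
  intro p _ q _ h
  have e1 := congrArg Prod.fst h
  have e2 := congrArg Prod.snd h
  simp only at e1 e2
  exact Prod.ext e1 (by omega)

lemma psi_rd {m : ℕ} (hm : 1 ≤ m) {B : Arcs} (v : ℕ) :
    rd (B.image fun p => (p.1, p.2 + m - 1)) v = rd B v := by
  unfold rd
  rw [Finset.filter_image]
  rw [Finset.card_image_of_injOn (psi_injOn hm _)]

lemma psi_ld_eq {m : ℕ} (hm : 1 ≤ m) {B : Arcs} (j : ℕ) :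
    ld (B.image fun p => (p.1, p.2 + m - 1)) (j + m - 1) = ld B j := by
  unfold ld
  rw [Finset.filter_image]
  rw [Finset.card_image_of_injOn (psi_injOn hm _)]
  congr 1
  apply Finset.filter_congr
  intro x _
  simp only
  constructor <;> intro h <;> omega

lemma psi_ld_zero {m : ℕ} {B : Arcs} (hB : ∀ p ∈ B, 1 ≤ p.2) (v : ℕ) (hv : v < m) :
    ld (B.image fun p => (p.1, p.2 + m - 1)) v = 0 := by
  unfold ld
  rw [Finset.filter_image, Finset.card_eq_zero, Finset.image_eq_empty,
    Finset.filter_eq_empty_iff]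
  intro x hx
  have := hB x hx
  simp only
  omega

end ThetaBijection

/-- `θ_m` is a bijection from the `m`-regular linear stacks on `[n+m−1]` onto
the `m`-reduced zigzag stacks on `[n]`. -/
theorem theta_bijection (m n : ℕ) (hm : 2 ≤ m) (hn : 1 ≤ n) :
    Set.BijOn (theta m) {A : Arcs | RegLinear m (n + m - 1) A} {A : Arcs | MRed m n A} := by
  have hm1 : 1 ≤ m := by omega
  refine ⟨?_, ?_, ?_⟩
  · -- MapsTo
    intro A hA
    simp only [Set.mem_setOf_eq] at hA ⊢
    obtain ⟨hst, hlen, hdeg⟩ := hA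
    have hdiag := hst.1
    have h2 : ∀ p ∈ A, m ≤ p.2 := fun p hp => by
      have := hdiag p hp; have := hlen p hp; omega
    have hld := theta_ld hm1 h2
    have hrd := theta_rd hm1 h2
    have key : ∀ v w, v < w → w < v + m → ¬(0 < ld A w ∧ 0 < rd A v) :=
      fun v w hvw hwm h => reg_no_close hst hlen hvw hwm h.1 h.2
    refine ⟨⟨⟨?_, ?_⟩, ?_, ?_⟩, ?_, ?_⟩
    · -- IsDiagram n
      intro p hp
      simp only [theta, Finset.mem_image] at hp
      obtain ⟨q, hq, rfl⟩ := hp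
      have := hdiag q hq
      have := hlen q hq
      refine ⟨by omega, by omega, by omega⟩
    · -- noncrossing
      intro p hp q hq hcr
      simp only [theta, Finset.mem_image] at hp hq
      obtain ⟨p', hp', rfl⟩ := hp
      obtain ⟨q', hq', rfl⟩ := hq
      have := h2 p' hp'
      have := h2 q' hq'
      obtain ⟨c1, c2, c3⟩ := hcr
      simp only at c1 c2 c3
      exact hst.2 p' hp' q' hq' ⟨by omega, by omega, by omega⟩
    · -- deg ≤ 2
      intro v
      show ld (theta m A) v + rd (theta m A) v ≤ 2
      rw [hld, hrd]
      by_cases hc : 0 < ld A (v + m - 1) ∧ 0 < rd A v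
      · exact absurd hc (key v (v + m - 1) (by omega) (by omega))
      · have d1 : ld A (v + m - 1) + rd A (v + m - 1) ≤ 2 := hdeg _
        have d2 : ld A v + rd A v ≤ 2 := hdeg _
        omega
    · -- no vertex with both positive
      rintro v ⟨h1, h2'⟩
      rw [hld] at h1
      rw [hrd] at h2'
      exact key v (v + m - 1) (by omega) (by omega) ⟨h1, h2'⟩
    · -- condition (1)
      intro i hi him
      rw [hld, hrd]
      have d1 : ld A (i + m - 1) + rd A (i + m - 1) ≤ 2 := hdeg _
      have e : i + m - 1 + m - 1 = i + m - 1 + m - 1 := rfl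
      omega
    · -- condition (2)
      intro i j hi hij hjn hl hr
      rw [hld] at hl
      rw [hrd] at hr
      by_contra hcon
      exact key j (i + m - 1) (by omega) (by omega) ⟨hl, hr⟩
  · -- InjOn
    intro A hA B hB hAB
    simp only [Set.mem_setOf_eq] at hA hB
    have h2A : ∀ p ∈ A, m ≤ p.2 := fun p hp => by
      have := hA.1.1 p hp; have := hA.2.1 p hp; omega
    have h2B : ∀ p ∈ B, m ≤ p.2 := fun p hp => by
      have := hB.1.1 p hp; have := hB.2.1 p hp; omega
    apply Finset.ext
    intro p
    constructor <;> intro hp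
    · have hmem : (p.1, p.2 - m + 1) ∈ theta m B := by
        rw [← hAB]
        exact Finset.mem_image_of_mem _ hp
      simp only [theta, Finset.mem_image] at hmem
      obtain ⟨q, hq, he⟩ := hmem
      have e1 := congrArg Prod.fst he
      have e2 := congrArg Prod.snd he
      simp only at e1 e2
      have hp2 := h2A p hp
      have hq2 := h2B q hq
      have : q = p := Prod.ext e1 (by omega)
      exact this ▸ hq
    · have hmem : (p.1, p.2 - m + 1) ∈ theta m A := by
        rw [hAB]
        exact Finset.mem_image_of_mem _ hp
      simp only [theta, Finset.mem_image] at hmem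
      obtain ⟨q, hq, he⟩ := hmem
      have e1 := congrArg Prod.fst he
      have e2 := congrArg Prod.snd he
      simp only at e1 e2
      have hp2 := h2B p hp
      have hq2 := h2A q hq
      have : q = p := Prod.ext e1 (by omega)
      exact this ▸ hq
  · -- SurjOn
    intro B hB
    simp only [Set.mem_setOf_eq] at hB
    obtain ⟨⟨⟨hdiag, hncr⟩, hdeg, hnb⟩, hc1, hc2⟩ := hB
    set A : Arcs := B.image (fun p => (p.1, p.2 + m - 1)) with hAdef
    have hBpos : ∀ p ∈ B, 1 ≤ p.2 := fun p hp => by have := hdiag p hp; omega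
    refine ⟨A, ?_, ?_⟩
    · -- A is an m-regular linear stack on [n+m-1]
      simp only [Set.mem_setOf_eq]
      refine ⟨⟨?_, ?_⟩, ?_, ?_⟩
      · -- IsDiagram (n+m-1)
        intro p hp
        simp only [hAdef, Finset.mem_image] at hp
        obtain ⟨q, hq, rfl⟩ := hp
        have := hdiag q hq
        refine ⟨by omega, by omega, by omega⟩
      · -- noncrossing
        intro p hp q hq hcr
        simp only [hAdef, Finset.mem_image] at hp hq
        obtain ⟨p', hp', rfl⟩ := hp
        obtain ⟨q', hq', rfl⟩ := hq
        obtain ⟨c1, c2, c3⟩ := hcr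
        simp only at c1 c2 c3
        have hdp := hdiag p' hp'
        have hdq := hdiag q' hq'
        rcases lt_trichotomy q'.1 p'.2 with h | h | h
        · exact hncr p' hp' q' hq' ⟨by omega, by omega, by omega⟩
        · have hl : 0 < ld B q'.1 := h ▸ ld_pos_of_mem hp'
          have hr : 0 < rd B q'.1 := rd_pos_of_mem hq'
          exact hnb q'.1 ⟨hl, hr⟩
        · have := hc2 p'.2 q'.1 (by omega) h (by omega)
            (ld_pos_of_mem hp') (rd_pos_of_mem hq')
          omega
      · -- arc lengths ≥ m
        intro p hp
        simp only [hAdef, Finset.mem_image] at hp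
        obtain ⟨q, hq, rfl⟩ := hp
        have := hdiag q hq
        simp only
        omega
      · -- degrees ≤ 2
        intro v
        show ld A v + rd A v ≤ 2
        rw [hAdef, psi_rd hm1]
        by_cases hv : v < m
        · rw [psi_ld_zero hBpos v hv]
          have := hdeg v
          unfold deg at this
          omega
        · push_neg at hv
          have hv' : v = (v - m + 1) + m - 1 := by omega
          rw [hv', psi_ld_eq hm1]
          rw [← hv']
          by_cases hvn : v ≤ n
          · have := hc1 (v - m + 1) (by omega) (by omega)
            have he : v - m + 1 + m - 1 = v := by omega
            rw [he] at this
            exact this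
          · have hr0 : rd B v = 0 := by
              apply rd_eq_zero_of_forall
              intro p hp
              have := hdiag p hp
              omega
            rw [hr0]
            have := hdeg (v - m + 1)
            unfold deg at this
            omega
    · -- theta m A = B
      show theta m A = B
      rw [hAdef]
      unfold theta
      rw [Finset.image_image]
      have : B.image ((fun p : ℕ × ℕ => (p.1, p.2 - m + 1)) ∘ (fun p : ℕ × ℕ => (p.1, p.2 + m - 1)))
          = B.image id := by
        apply Finset.image_congr
        intro x hx
        have := hBpos x hx
        simp only [Function.comp_apply, id]
        have : x.2 + m - 1 - m + 1 = x.2 := by omega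
        rw [this]
      rw [this, Finset.image_id]
end Paper
end

section
/- Fix an integer m ≥ 2. Let S be a zigzag stack on [n], let C be its primary component, and for each C-interval ⟨u,v⟩ between consecutive vertices u < v of C set J = {u, u+1, …, v}, and, if C does not contain n and u is the largest vertex of C, also set J = {u, u+1, …, n}. Then S is an m-reduced zigzag stack if and only if for each such set J the following hold (degrees taken in S): (1) ld(i) + rd(i+m−1) ≤ 2 whenever both i and i+m−1 lie in J; (2) whenever i < j both lie in J with ld(i) > 0 and rd(j) > 0, then j − i ≥ m−1. -/
open PowerSeries

namespace Paper

section Aux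

open Classical

lemma ld_pos_iff (A : Arcs) (v : ℕ) : 0 < ld A v ↔ ∃ p ∈ A, p.2 = v := by
  simp [ld, Finset.card_pos, Finset.filter_nonempty_iff]

lemma rd_pos_iff (A : Arcs) (v : ℕ) : 0 < rd A v ↔ ∃ p ∈ A, p.1 = v := by
  simp [rd, Finset.card_pos, Finset.filter_nonempty_iff]

lemma primary_pos {n : ℕ} {A : Arcs} (hD : IsDiagram n A) {v : ℕ}
    (hv : inPrimary A v) : 1 ≤ v := by
  induction hv with
  | refl => exact le_refl 1
  | tail _ h ih =>
    rcases h with h | h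
    · exact le_trans (hD _ h).1 (le_of_lt (hD _ h).2.1)
    · exact (hD _ h).1

lemma primary_le {n : ℕ} {A : Arcs} (hD : IsDiagram n A) (hn : 1 ≤ n) {v : ℕ}
    (hv : inPrimary A v) : v ≤ n := by
  induction hv with
  | refl => exact hn
  | tail _ h ih =>
    rcases h with h | h
    · exact (hD _ h).2.2
    · exact le_trans (le_of_lt (hD _ h).2.1) (hD _ h).2.2

lemma primary_deg {A : Arcs} {w : ℕ} (hw : inPrimary A w) (hw1 : w ≠ 1) :
    0 < ld A w ∨ 0 < rd A w := by
  rcases (Relation.ReflTransGen.cases_tail hw) with h | ⟨c, _, hc⟩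
  · exact absurd h hw1
  · rcases hc with h | h
    · exact Or.inl ((ld_pos_iff A w).2 ⟨_, h, rfl⟩)
    · exact Or.inr ((rd_pos_iff A w).2 ⟨_, h, rfl⟩)

/-- If there is no primary vertex strictly between `i` and `j`, then `i` and `j`
lie in a common interval `J` on which the conditions hold. -/
lemma exists_interval {m n : ℕ} {A : Arcs} (hD : IsDiagram n A)
    (hL : (∀ u v : ℕ, inPrimary A u → inPrimary A v → u < v → v ≤ n →
          (∀ w, u < w → w < v → ¬ inPrimary A w) →
          CondOn m A (Finset.Icc u v)) ∧
       (∀ u : ℕ, inPrimary A u → u ≤ n → ¬ inPrimary A n →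
          (∀ w, inPrimary A w → w ≤ n → w ≤ u) →
          CondOn m A (Finset.Icc u n)))
    {i j : ℕ} (h1 : 1 ≤ i) (hij : i < j) (hjn : j ≤ n)
    (hnp : ∀ w, i < w → w < j → ¬ inPrimary A w) :
    ∃ J : Finset ℕ, CondOn m A J ∧ i ∈ J ∧ j ∈ J := by
  have hn1 : 1 ≤ n := le_trans (le_trans h1 (le_of_lt hij)) hjn
  classical
  set T : Finset ℕ := (Finset.Icc 1 i).filter (fun w => inPrimary A w) with hT
  have hTne : T.Nonempty := ⟨1, Finset.mem_filter.2 ⟨Finset.mem_Icc.2 ⟨le_rfl, h1⟩, Relation.ReflTransGen.refl⟩⟩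
  set u : ℕ := T.max' hTne with hu
  have huT : u ∈ T := T.max'_mem hTne
  have huP : inPrimary A u := (Finset.mem_filter.1 huT).2
  have hui : u ≤ i := (Finset.mem_Icc.1 (Finset.mem_filter.1 huT).1).2
  have hmax : ∀ w, inPrimary A w → w ≤ i → w ≤ u := by
    intro w hwP hwi
    exact T.le_max' w (Finset.mem_filter.2 ⟨Finset.mem_Icc.2 ⟨primary_pos hD hwP, hwi⟩, hwP⟩)
  set S : Finset ℕ := (Finset.Icc 1 n).filter (fun w => inPrimary A w ∧ u < w) with hS
  by_cases hSne : S.Nonempty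
  · set v : ℕ := S.min' hSne with hv
    have hvS : v ∈ S := S.min'_mem hSne
    have hvP : inPrimary A v := (Finset.mem_filter.1 hvS).2.1
    have huv : u < v := (Finset.mem_filter.1 hvS).2.2
    have hvn : v ≤ n := (Finset.mem_Icc.1 (Finset.mem_filter.1 hvS).1).2
    have hiv : i < v := by
      by_contra h
      exact absurd (hmax v hvP (le_of_not_gt h)) (not_le_of_gt huv)
    have hjv : j ≤ v := by
      by_contra h
      exact hnp v hiv (lt_of_not_ge h) hvP
    have hcond : CondOn m A (Finset.Icc u v) := by
      refine hL.1 u v huP hvP huv hvn ?_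
      intro w hw1 hw2 hwP
      have : w ∈ S := Finset.mem_filter.2
        ⟨Finset.mem_Icc.2 ⟨primary_pos hD hwP, le_trans (le_of_lt hw2) hvn⟩, hwP, hw1⟩
      exact absurd (S.min'_le w this) (not_le_of_gt hw2)
    exact ⟨Finset.Icc u v, hcond, Finset.mem_Icc.2 ⟨hui, le_trans (le_of_lt hij) hjv⟩,
      Finset.mem_Icc.2 ⟨le_trans hui (le_of_lt hij), hjv⟩⟩
  · have hall : ∀ w, inPrimary A w → w ≤ n → w ≤ u := by
      intro w hwP hwn
      by_contra h
      exact hSne ⟨w, Finset.mem_filter.2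
        ⟨Finset.mem_Icc.2 ⟨primary_pos hD hwP, hwn⟩, hwP, lt_of_not_ge h⟩⟩
    have hnP : ¬ inPrimary A n := by
      intro h
      have := hall n h le_rfl
      omega
    have hcond : CondOn m A (Finset.Icc u n) :=
      hL.2 u huP (le_trans hui (le_trans (le_of_lt hij) hjn)) hnP hall
    exact ⟨Finset.Icc u n, hcond, Finset.mem_Icc.2 ⟨hui, le_trans (le_of_lt hij) hjn⟩,
      Finset.mem_Icc.2 ⟨le_trans hui (le_of_lt hij), hjn⟩⟩

/-- Backward key lemma: condition (2) holds globally. -/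
lemma cond2_global {m n : ℕ} {A : Arcs} (hD : IsDiagram n A)
    (hL : (∀ u v : ℕ, inPrimary A u → inPrimary A v → u < v → v ≤ n →
          (∀ w, u < w → w < v → ¬ inPrimary A w) →
          CondOn m A (Finset.Icc u v)) ∧
       (∀ u : ℕ, inPrimary A u → u ≤ n → ¬ inPrimary A n →
          (∀ w, inPrimary A w → w ≤ n → w ≤ u) →
          CondOn m A (Finset.Icc u n))) :
    ∀ d i j, j - i ≤ d → 1 ≤ i → i < j → j ≤ n → 0 < ld A i → 0 < rd A j →
      i + m ≤ j + 1 := by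
  intro d
  induction d with
  | zero => intro i j hd h1 hij _ _ _; omega
  | succ d ih =>
    intro i j hd h1 hij hjn hli hrj
    by_cases hnp : ∀ w, i < w → w < j → ¬ inPrimary A w
    · obtain ⟨J, hJ, hiJ, hjJ⟩ := exists_interval hD hL h1 hij hjn hnp
      exact hJ.2 i j hiJ hjJ hij hli hrj
    · push_neg at hnp
      obtain ⟨w, hiw, hwj, hwP⟩ := hnp
      have hw1 : w ≠ 1 := by omega
      rcases primary_deg hwP hw1 with hld | hrd
      · have := ih w j (by omega) (by omega) hwj hjn hld hrj
        omega
      · have := ih i w (by omega) h1 hiw (by omega) hli hrd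
        omega

end Aux

/-- a zigzag stack is `m`-reduced iff conditions (1) and (2) hold on every
set `J = {u,…,v}` for consecutive vertices `u < v` of the primary component, and on
`J = {u,…,n}` when the primary component does not contain `n` and `u` is its largest
vertex. -/
theorem mreduced_iff_conditions_on_intervals (m n : ℕ) (hm : 2 ≤ m) (A : Arcs)
    (hA : IsZigzag n A) :
    MRed m n A ↔
      ((∀ u v : ℕ, inPrimary A u → inPrimary A v → u < v → v ≤ n →
          (∀ w, u < w → w < v → ¬ inPrimary A w) →
          CondOn m A (Finset.Icc u v)) ∧
       (∀ u : ℕ, inPrimary A u → u ≤ n → ¬ inPrimary A n →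
          (∀ w, inPrimary A w → w ≤ n → w ≤ u) →
          CondOn m A (Finset.Icc u n))) := by
  constructor
  · rintro ⟨hz, h1, h2⟩
    have hD : IsDiagram n A := hz.1.1
    constructor
    · intro u v huP hvP huv hvn _
      constructor
      · intro i hiJ hjJ
        have hiu := (Finset.mem_Icc.1 hiJ).1
        have hju := (Finset.mem_Icc.1 hjJ).2
        have h1u : 1 ≤ u := primary_pos hD huP
        exact h1 i (le_trans h1u hiu) (by omega)
      · intro i j hiJ hjJ hij hli hrj
        have h1u : 1 ≤ u := primary_pos hD huP
        exact h2 i j (le_trans h1u (Finset.mem_Icc.1 hiJ).1) hij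
          (le_trans (Finset.mem_Icc.1 hjJ).2 hvn) hli hrj
    · intro u huP hun _ _
      have h1u : 1 ≤ u := primary_pos hD huP
      constructor
      · intro i hiJ hjJ
        have hiu := (Finset.mem_Icc.1 hiJ).1
        have hju := (Finset.mem_Icc.1 hjJ).2
        exact h1 i (le_trans h1u hiu) (by omega)
      · intro i j hiJ hjJ hij hli hrj
        exact h2 i j (le_trans h1u (Finset.mem_Icc.1 hiJ).1) hij
          (Finset.mem_Icc.1 hjJ).2 hli hrj
  · intro hL
    have hD : IsDiagram n A := hA.1.1
    refine ⟨hA, ?_, ?_⟩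
    · intro i h1 hin
      by_cases hli : 0 < ld A i
      · by_cases hrj : 0 < rd A (i + m - 1)
        · set j := i + m - 1 with hj
          have hij : i < j := by omega
          have hjn : j ≤ n := by omega
          by_cases hnp : ∀ w, i < w → w < j → ¬ inPrimary A w
          · obtain ⟨J, hJ, hiJ, hjJ⟩ := exists_interval hD hL h1 hij hjn hnp
            exact hJ.1 i hiJ (by rw [← hj]; exact hjJ)
          · push_neg at hnp
            obtain ⟨w, hiw, hwj, hwP⟩ := hnp
            have hw1 : w ≠ 1 := by omega
            rcases primary_deg hwP hw1 with hld | hrd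
            · have := cond2_global hD hL (j - w) w j le_rfl (by omega) hwj hjn hld hrj
              omega
            · have := cond2_global hD hL (w - i) i w le_rfl h1 hiw (by omega) hli hrd
              omega
        · have : rd A (i + m - 1) = 0 := by omega
          have hle : ld A i ≤ 2 := by
            have := hA.2.1 i
            simp only [deg] at this
            omega
          omega
      · have : ld A i = 0 := by omega
        have hle : rd A (i + m - 1) ≤ 2 := by
          have := hA.2.1 (i + m - 1)
          simp only [deg] at this
          omega
        omega
    · intro i j h1 hij hjn hli hrj
      exact cond2_global hD hL (j - i) i j le_rfl h1 hij hjn hli hrj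
end Paper
end
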